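/- Let (A,e) be an M(α,β)-algebra (α, β, 1, 0 pairwise distinct) satisfying the Martindale-like conditions (i)–(v), and let f be a nullifying function on A. Then f(a₁, a₀, a_α, a_β) = 0 for all a_i ∈ A_i, i ∈ {1, 0, α, β}. -/

import Mathlib

/-- Composite of left multiplications: `Lmul [t₁,…,t_r] x = t₁ * (t₂ * (⋯ * (t_r * x)))`. -/
def Lmul {A : Type*} [Mul A] (ts : List A) (x : A) : A := ts.foldr (· * ·) x

/-- A nullifying function on the nonempty finite sequences of `A`, with associated
positive integer `r` for axiom (V). -/
def IsNullifying {A : Type*} [NonUnitalNonAssocCommRing A] (f : List A → A) (r : ℕ) : Prop :=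
  0 < r ∧
  -- (I) permutation invariance
  (∀ l l' : List A, l.Perm l' → f l = f l') ∧
  -- (II)
  (∀ s t : List A, s ≠ [] → t ≠ [] → (f (s ++ [t.sum]) = f (s ++ t) ↔ f t = 0)) ∧
  -- (III)
  (∀ x : A, f [x] = 0) ∧
  -- (IV)
  (∀ s : List A, s ≠ [] → f (s ++ [(0 : A)]) = f s) ∧
  -- (V)
  (∀ ts : List A, ts.length = r → ∀ l : List A, Lmul ts (f l) = f (l.map (Lmul ts)))
/-- The `lam`-eigenspace (as a set) of left multiplication by `e`. -/
def eigSet {F A : Type*} [Field F] [NonUnitalNonAssocCommRing A] [Module F A]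
    (e : A) (lam : F) : Set A := {x | e * x = lam • x}
/-- `(A, e)` is an `M(α,β)`-algebra: `e` idempotent, `1, 0, α, β` pairwise distinct,
`A` decomposes as the sum of the `1`-, `0`-, `α`- and `β`-eigenspaces of `L_e`, and the
Monster-type fusion law holds. -/
structure IsMAlg {F A : Type*} [Field F] [NonUnitalNonAssocCommRing A] [Module F A]
    (e : A) (α β : F) : Prop where
  idem : e * e = e
  hα0 : α ≠ 0
  hα1 : α ≠ 1
  hβ0 : β ≠ 0
  hβ1 : β ≠ 1
  hαβ : α ≠ β
  decomp : ∀ x : A, ∃ x1 ∈ eigSet e (1 : F), ∃ x0 ∈ eigSet e (0 : F), ∃ xa ∈ eigSet e α,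
    ∃ xb ∈ eigSet e β, x = x1 + x0 + xa + xb
  f11 : ∀ x ∈ eigSet e (1 : F), ∀ y ∈ eigSet e (1 : F), x * y ∈ eigSet e (1 : F)
  f10 : ∀ x ∈ eigSet e (1 : F), ∀ y ∈ eigSet e (0 : F), x * y = 0
  f1a : ∀ x ∈ eigSet e (1 : F), ∀ y ∈ eigSet e α, x * y ∈ eigSet e α
  f1b : ∀ x ∈ eigSet e (1 : F), ∀ y ∈ eigSet e β, x * y ∈ eigSet e β
  f00 : ∀ x ∈ eigSet e (0 : F), ∀ y ∈ eigSet e (0 : F), x * y ∈ eigSet e (0 : F)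
  f0a : ∀ x ∈ eigSet e (0 : F), ∀ y ∈ eigSet e α, x * y ∈ eigSet e α
  f0b : ∀ x ∈ eigSet e (0 : F), ∀ y ∈ eigSet e β, x * y ∈ eigSet e β
  faa : ∀ x ∈ eigSet e α, ∀ y ∈ eigSet e α, ∃ z1 ∈ eigSet e (1 : F), ∃ z0 ∈ eigSet e (0 : F),
    x * y = z1 + z0
  fab : ∀ x ∈ eigSet e α, ∀ y ∈ eigSet e β, x * y ∈ eigSet e β
  fbb : ∀ x ∈ eigSet e β, ∀ y ∈ eigSet e β, ∃ z1 ∈ eigSet e (1 : F), ∃ z0 ∈ eigSet e (0 : F),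
    ∃ za ∈ eigSet e α, x * y = z1 + z0 + za

/-- Martindale-like conditions (i)–(v) for an `M(α,β)`-algebra. -/
def MartindaleM {F A : Type*} [Field F] [NonUnitalNonAssocCommRing A] [Module F A]
    (e : A) (α β : F) : Prop :=
  (∀ a ∈ eigSet e (1 : F), (∀ t ∈ eigSet e α, t * a = 0) → a = 0) ∧
  (∀ a ∈ eigSet e (0 : F), (∀ t ∈ eigSet e α, t * a = 0) → a = 0) ∧
  (∀ a ∈ eigSet e (0 : F), (∀ t ∈ eigSet e (0 : F), t * a = 0) → a = 0) ∧
  (∀ a ∈ eigSet e α, (∀ t ∈ eigSet e (0 : F), t * a = 0) → a = 0) ∧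
  (∀ a ∈ eigSet e β, (∀ t ∈ eigSet e (0 : F), t * a = 0) → a = 0) ∧
  (∀ a ∈ eigSet e β, (∀ t ∈ eigSet e α, t * a = 0) → a = 0) ∧
  (∀ a ∈ eigSet e α, (∀ t ∈ eigSet e β, t * a = 0) → a = 0)


set_option linter.unusedSectionVars false

section Basic
variable {F A : Type*} [Field F] [NonUnitalNonAssocCommRing A] [Module F A]
  [SMulCommClass F A A] [IsScalarTower F A A]

lemma Lmul_nil (x : A) : Lmul [] x = x := rfl

lemma Lmul_cons (t : A) (ts : List A) (x : A) : Lmul (t :: ts) x = t * Lmul ts x := rfl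

lemma Lmul_append (s t : List A) (x : A) : Lmul (s ++ t) x = Lmul s (Lmul t x) := by
  simp [Lmul, List.foldr_append]

lemma Lmul_add (ts : List A) (x y : A) : Lmul ts (x + y) = Lmul ts x + Lmul ts y := by
  induction ts with
  | nil => rfl
  | cons t ts ih => simp [Lmul_cons, ih, mul_add]

lemma Lmul_zero (ts : List A) : Lmul ts (0 : A) = 0 := by
  induction ts with
  | nil => rfl
  | cons t ts ih => simp [Lmul_cons, ih]

lemma Lmul_smul (ts : List A) (c : F) (x : A) : Lmul ts (c • x) = c • Lmul ts x := by
  induction ts with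
  | nil => rfl
  | cons t ts ih => simp [Lmul_cons, ih, mul_smul_comm]

variable {e : A} {lam mu : F}

lemma mem_eig {x : A} : x ∈ eigSet e lam ↔ e * x = lam • x := Iff.rfl

lemma eig_zero : (0 : A) ∈ eigSet e lam := by simp [mem_eig]

lemma eig_add {x y : A} (hx : x ∈ eigSet e lam) (hy : y ∈ eigSet e lam) :
    x + y ∈ eigSet e lam := by
  have hx' : e * x = lam • x := hx
  have hy' : e * y = lam • y := hy
  simp [mem_eig, mul_add, hx', hy', smul_add]

lemma eig_smul {x : A} (c : F) (hx : x ∈ eigSet e lam) : c • x ∈ eigSet e lam := by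
  have hx' : e * x = lam • x := hx
  show e * (c • x) = lam • (c • x)
  rw [mul_smul_comm, hx', smul_comm]

lemma eig_neg {x : A} (hx : x ∈ eigSet e lam) : -x ∈ eigSet e lam := by
  have hx' : e * x = lam • x := hx
  simp [mem_eig, hx']

lemma eig_sub {x y : A} (hx : x ∈ eigSet e lam) (hy : y ∈ eigSet e lam) :
    x - y ∈ eigSet e lam := by
  simpa [sub_eq_add_neg] using eig_add hx (eig_neg hy)

lemma smul_cancel {c : F} (hc : c ≠ 0) {x : A} (hx : c • x = 0) : x = 0 := by
  have h := congrArg (fun w => c⁻¹ • w) hx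
  simpa [smul_smul, inv_mul_cancel₀ hc] using h

lemma eig_disjoint (hne : lam ≠ mu) {x : A} (h1 : x ∈ eigSet e lam) (h2 : x ∈ eigSet e mu) :
    x = 0 := by
  have h1' : e * x = lam • x := h1
  have h2' : e * x = mu • x := h2
  have h3 : (lam - mu) • x = 0 := by rw [sub_smul, ← h1', h2', sub_self]
  exact smul_cancel (sub_ne_zero.mpr hne) h3

end Basic

section Alg
variable {F A : Type*} [Field F] [NonUnitalNonAssocCommRing A] [Module F A]
  [SMulCommClass F A A] [IsScalarTower F A A] {e : A} {α β : F}

lemma pA0A1 (h : IsMAlg e α β) {t a : A} (ht : t ∈ eigSet e (0 : F))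
    (ha : a ∈ eigSet e (1 : F)) : t * a = 0 := by
  rw [mul_comm]; exact h.f10 a ha t ht

lemma pA0A0 (h : IsMAlg e α β) {t a : A} (ht : t ∈ eigSet e (0 : F))
    (ha : a ∈ eigSet e (0 : F)) : t * a ∈ eigSet e (0 : F) := h.f00 t ht a ha

lemma pA0Aa (h : IsMAlg e α β) {t a : A} (ht : t ∈ eigSet e (0 : F))
    (ha : a ∈ eigSet e α) : t * a ∈ eigSet e α := h.f0a t ht a ha

lemma pA0Ab (h : IsMAlg e α β) {t a : A} (ht : t ∈ eigSet e (0 : F))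
    (ha : a ∈ eigSet e β) : t * a ∈ eigSet e β := h.f0b t ht a ha

lemma pAaA1 (h : IsMAlg e α β) {t a : A} (ht : t ∈ eigSet e α)
    (ha : a ∈ eigSet e (1 : F)) : t * a ∈ eigSet e α := by
  rw [mul_comm]; exact h.f1a a ha t ht

lemma pAaA0 (h : IsMAlg e α β) {t a : A} (ht : t ∈ eigSet e α)
    (ha : a ∈ eigSet e (0 : F)) : t * a ∈ eigSet e α := by
  rw [mul_comm]; exact h.f0a a ha t ht

lemma pAaAb (h : IsMAlg e α β) {t a : A} (ht : t ∈ eigSet e α)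
    (ha : a ∈ eigSet e β) : t * a ∈ eigSet e β := h.fab t ht a ha

lemma pAbA1 (h : IsMAlg e α β) {t a : A} (ht : t ∈ eigSet e β)
    (ha : a ∈ eigSet e (1 : F)) : t * a ∈ eigSet e β := by
  rw [mul_comm]; exact h.f1b a ha t ht

lemma pAbA0 (h : IsMAlg e α β) {t a : A} (ht : t ∈ eigSet e β)
    (ha : a ∈ eigSet e (0 : F)) : t * a ∈ eigSet e β := by
  rw [mul_comm]; exact h.f0b a ha t ht

lemma pAbAa (h : IsMAlg e α β) {t a : A} (ht : t ∈ eigSet e β)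
    (ha : a ∈ eigSet e α) : t * a ∈ eigSet e β := by
  rw [mul_comm]; exact h.fab a ha t ht

/-- uniqueness of eigencomponent decompositions -/
lemma uniq (h : IsMAlg e α β) {z1 z0 za zb : A}
    (h1 : z1 ∈ eigSet e (1 : F)) (h0 : z0 ∈ eigSet e (0 : F))
    (ha : za ∈ eigSet e α) (hb : zb ∈ eigSet e β)
    (hs : z1 + z0 + za + zb = 0) : z1 = 0 ∧ z0 = 0 ∧ za = 0 ∧ zb = 0 := by
  have h1' : e * z1 = z1 := by
    have : e * z1 = (1 : F) • z1 := h1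
    simpa using this
  have h0' : e * z0 = 0 := by
    have : e * z0 = (0 : F) • z0 := h0
    simpa using this
  have ha' : e * za = α • za := ha
  have hb' : e * zb = β • zb := hb
  have S1 : z1 + α • za + β • zb = 0 := by
    have h' := congrArg (fun w => e * w) hs
    simpa [mul_add, h1', h0', ha', hb'] using h'
  have S2 : z1 + (α * α) • za + (β * β) • zb = 0 := by
    have h' := congrArg (fun w => e * w) S1
    simpa [mul_add, h1', ha', hb', mul_smul_comm, smul_smul, mul_comm] using h'
  have S3 : z1 + (α * α * α) • za + (β * β * β) • zb = 0 := by
    have h' := congrArg (fun w => e * w) S2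
    simpa [mul_add, h1', ha', hb', mul_smul_comm, smul_smul, mul_comm, mul_left_comm] using h'
  have D1 : (α * α - α) • za + (β * β - β) • zb = 0 := by
    have h' : (z1 + (α * α) • za + (β * β) • zb) - (z1 + α • za + β • zb) = 0 := by
      rw [S2, S1, sub_zero]
    rw [sub_smul, sub_smul, ← h']; abel
  have D2 : (α * α * α - α * α) • za + (β * β * β - β * β) • zb = 0 := by
    have h' : (z1 + (α * α * α) • za + (β * β * β) • zb) - (z1 + (α * α) • za + (β * β) • zb) = 0 := by
      rw [S3, S2, sub_zero]
    rw [sub_smul, sub_smul, ← h']; abel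
  have aD1 : (α * α * α - α * α) • za + (α * (β * β - β)) • zb = 0 := by
    have h' := congrArg (fun w => α • w) D1
    have e1 : α * (α * α - α) = α * α * α - α * α := by ring
    simpa [smul_add, smul_smul, e1] using h'
  have D3 : ((β * β * β - β * β) - α * (β * β - β)) • zb = 0 := by
    have h' : ((α * α * α - α * α) • za + (β * β * β - β * β) • zb)
        - ((α * α * α - α * α) • za + (α * (β * β - β)) • zb) = 0 := by
      rw [D2, aD1, sub_zero]
    rw [sub_smul, ← h']; abel
  have hcb : (β * β * β - β * β) - α * (β * β - β) ≠ 0 := by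
    have e1 : (β * β * β - β * β) - α * (β * β - β) = β * (β - 1) * (β - α) := by ring
    rw [e1]
    exact mul_ne_zero (mul_ne_zero h.hβ0 (sub_ne_zero.mpr h.hβ1))
      (sub_ne_zero.mpr (Ne.symm h.hαβ))
  have hzb : zb = 0 := smul_cancel hcb D3
  have hza : za = 0 := by
    have D1' : (α * α - α) • za = 0 := by simpa [hzb] using D1
    have hca : α * α - α ≠ 0 := by
      have e1 : α * α - α = α * (α - 1) := by ring
      rw [e1]; exact mul_ne_zero h.hα0 (sub_ne_zero.mpr h.hα1)
    exact smul_cancel hca D1'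
  have hz1 : z1 = 0 := by simpa [hza, hzb] using S1
  have hz0 : z0 = 0 := by simpa [hz1, hza, hzb] using hs
  exact ⟨hz1, hz0, hza, hzb⟩

end Alg

section Peel
variable {F A : Type*} [Field F] [NonUnitalNonAssocCommRing A] [Module F A]
  [SMulCommClass F A A] [IsScalarTower F A A] {e : A} {α β : F}

/-- Lmul along an `A₀`-list preserves a set closed under left mult by `A₀`. -/
lemma LA0_pres {S : Set A} (hcl : ∀ t ∈ eigSet e (0 : F), ∀ z ∈ S, t * z ∈ S) :
    ∀ us : List A, (∀ u ∈ us, u ∈ eigSet e (0 : F)) → ∀ z ∈ S, Lmul us z ∈ S := by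
  intro us
  induction us with
  | nil => intro _ z hz; exact hz
  | cons u us ih =>
    intro hmem z hz
    rw [Lmul_cons]
    exact hcl u (hmem u (List.mem_cons_self)) _
      (ih (fun v hv => hmem v (List.mem_cons_of_mem u hv)) z hz)

lemma LA0_kill (h : IsMAlg e α β) :
    ∀ us : List A, us ≠ [] → (∀ u ∈ us, u ∈ eigSet e (0 : F)) →
      ∀ a ∈ eigSet e (1 : F), Lmul us a = 0 := by
  intro us
  induction us with
  | nil => intro hne; exact absurd rfl hne
  | cons u us ih =>
    intro _ hmem a ha
    rw [Lmul_cons]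
    cases us with
    | nil => exact pA0A1 h (hmem u (List.mem_cons_self)) ha
    | cons v vs =>
      rw [ih (List.cons_ne_nil v vs) (fun w hw => hmem w (List.mem_cons_of_mem u hw)) a ha,
        mul_zero]

/-- Peeling an eigenspace by A₀-words. -/
lemma peel_eig {S : Set A} (hcl : ∀ t ∈ eigSet e (0 : F), ∀ z ∈ S, t * z ∈ S)
    (hmart : ∀ z ∈ S, (∀ t ∈ eigSet e (0 : F), t * z = 0) → z = 0) :
    ∀ (k : ℕ) (y : A), y ∈ S →
      (∀ us : List A, us.length = k → (∀ u ∈ us, u ∈ eigSet e (0 : F)) → Lmul us y = 0) →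
      y = 0 := by
  intro k
  induction k with
  | zero => intro y _ hall; simpa [Lmul_nil] using hall [] rfl (by simp)
  | succ k ih =>
    intro y hy hall
    apply hmart y hy
    intro t ht
    apply ih (t * y) (hcl t ht y hy)
    intro us hlen hmem
    have h' := hall (us ++ [t]) (by simp [hlen]) (by
      intro u hu
      rcases List.mem_append.mp hu with h1 | h1
      · exact hmem u h1
      · simpa using (List.mem_singleton.mp h1) ▸ ht)
    rwa [Lmul_append] at h'

/-- A₀-word peeling kills the 0-, α-, β- components. -/
lemma peel_gen (h : IsMAlg e α β) (hm : MartindaleM e α β) :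
    ∀ (k : ℕ) (x x1 x0 xa xb : A), x1 ∈ eigSet e (1 : F) → x0 ∈ eigSet e (0 : F) →
      xa ∈ eigSet e α → xb ∈ eigSet e β → x = x1 + x0 + xa + xb →
      (∀ us : List A, us.length = k → (∀ u ∈ us, u ∈ eigSet e (0 : F)) → Lmul us x = 0) →
      x0 = 0 ∧ xa = 0 ∧ xb = 0 := by
  intro k
  induction k with
  | zero =>
    intro x x1 x0 xa xb m1 m0 ma mb hd hall
    have hx : x = 0 := by simpa [Lmul_nil] using hall [] rfl (by simp)
    have hs : x1 + x0 + xa + xb = 0 := by rw [← hd, hx]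
    obtain ⟨_, h0, ha', hb'⟩ := uniq h m1 m0 ma mb hs
    exact ⟨h0, ha', hb'⟩
  | succ k ih =>
    intro x x1 x0 xa xb m1 m0 ma mb hd hall
    have key : ∀ t ∈ eigSet e (0 : F), t * x0 = 0 ∧ t * xa = 0 ∧ t * xb = 0 := by
      intro t ht
      have hdt : t * x = 0 + t * x0 + t * xa + t * xb := by
        rw [hd, mul_add, mul_add, mul_add, pA0A1 h ht m1]
      apply ih (t * x) 0 (t * x0) (t * xa) (t * xb)
        (by simpa using (eig_zero : (0:A) ∈ eigSet e (1:F)))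
        (pA0A0 h ht m0) (pA0Aa h ht ma) (pA0Ab h ht mb) hdt
      intro us hlen hmem
      have h' := hall (us ++ [t]) (by simp [hlen]) (by
        intro u hu
        rcases List.mem_append.mp hu with h1 | h1
        · exact hmem u h1
        · simpa using (List.mem_singleton.mp h1) ▸ ht)
      rwa [Lmul_append] at h'
    obtain ⟨_, m2', m3', m4', m5', _, _⟩ := hm
    refine ⟨m3' x0 m0 (fun t ht => (key t ht).1), m4' xa ma (fun t ht => (key t ht).2.1),
      m5' xb mb (fun t ht => (key t ht).2.2)⟩

end Peel

section Fside
variable {F A : Type*} [Field F] [NonUnitalNonAssocCommRing A] [Module F A]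
  [SMulCommClass F A A] [IsScalarTower F A A] {e : A} {α β : F}
variable {f : List A → A} {r : ℕ}

lemma fV_mul (hf : IsNullifying f r) :
    ∀ (k : ℕ) (ts : List A), ts.length = k * r →
      ∀ l : List A, Lmul ts (f l) = f (l.map (Lmul ts)) := by
  obtain ⟨-, -, -, -, -, fV⟩ := hf
  intro k
  induction k with
  | zero =>
    intro ts hl l
    have : ts = [] := List.eq_nil_of_length_eq_zero (by simpa using hl)
    subst this
    rw [Lmul_nil]
    have : l.map (Lmul []) = l := by
      have : (Lmul [] : A → A) = id := rfl
      rw [this, List.map_id]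
    rw [this]
  | succ k ih =>
    intro ts hl l
    have hl' : ts.length = k * r + r := by rw [hl, Nat.succ_mul]
    have h1 : (ts.take (k * r)).length = k * r := by
      rw [List.length_take, hl']; omega
    have h2 : (ts.drop (k * r)).length = r := by
      rw [List.length_drop, hl']; omega
    calc Lmul ts (f l) = Lmul (ts.take (k * r) ++ ts.drop (k * r)) (f l) := by
          rw [List.take_append_drop]
      _ = Lmul (ts.take (k * r)) (Lmul (ts.drop (k * r)) (f l)) := Lmul_append _ _ _
      _ = Lmul (ts.take (k * r)) (f (l.map (Lmul (ts.drop (k * r))))) := by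
          rw [fV _ h2]
      _ = f ((l.map (Lmul (ts.drop (k * r)))).map (Lmul (ts.take (k * r)))) := ih _ h1 _
      _ = f (l.map (Lmul ts)) := by
          rw [List.map_map]
          congr 1
          apply List.map_congr_left
          intro a _
          show Lmul (ts.take (k * r)) (Lmul (ts.drop (k * r)) a) = Lmul ts a
          rw [← Lmul_append, List.take_append_drop]

lemma f_zero_head (hf : IsNullifying f r) (l : List A) (hl : l ≠ []) : f (0 :: l) = f l := by
  obtain ⟨-, fperm, -, -, fIV, -⟩ := hf
  rw [fperm _ _ (List.perm_append_singleton 0 l).symm, fIV l hl]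

lemma f_pair_zero (hf : IsNullifying f r) (c : A) : f [0, c] = 0 := by
  rw [f_zero_head hf [c] (by simp)]
  exact hf.2.2.2.1 c

lemma Lmul_replicate_eig (k : ℕ) {z : A} {lam : F} (hz : z ∈ eigSet e lam) :
    Lmul (List.replicate k e) z = lam ^ k • z := by
  induction k with
  | zero => simp [Lmul_nil]
  | succ k ih =>
    rw [List.replicate_succ, Lmul_cons, ih, mul_smul_comm, (mem_eig.mp hz : e * z = lam • z),
      smul_smul, ← pow_succ]

lemma Lmul_singleton (t x : A) : Lmul [t] x = t * x := rfl

variable (h : IsMAlg e α β) (hm : MartindaleM e α β) (hf : IsNullifying f r)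

include h hm hf in
/-- `f(a₀, a_β)` lies in `A₀`. -/
lemma L_V0b {b q : A} (hb : b ∈ eigSet e (0 : F)) (hq : q ∈ eigSet e β) :
    f [b, q] ∈ eigSet e (0 : F) := by
  have hr : 0 < r := hf.1
  set x := f [b, q] with hxdef
  obtain ⟨x1, m1, x0, m0, xa, ma, xb, mb, hd⟩ := h.decomp x
  have step1 : ∀ us : List A, us.length = 3 * r - 1 →
      (∀ u ∈ us, u ∈ eigSet e (0 : F)) → Lmul us (e * x) = 0 := by
    intro us hlen hmem
    have hV := fV_mul hf 3 (us ++ [e]) (by simp [hlen]; omega) [b, q]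
    rw [Lmul_append, Lmul_singleton] at hV
    have hbent : Lmul (us ++ [e]) b = 0 := by
      rw [Lmul_append, Lmul_singleton, mem_eig.mp hb, zero_smul, Lmul_zero]
    have hqent : Lmul (us ++ [e]) q ∈ eigSet e β := by
      rw [Lmul_append, Lmul_singleton, mem_eig.mp hq]
      exact LA0_pres (fun t ht z hz => pA0Ab h ht hz) us hmem _ (eig_smul β hq)
    have hmap : [b, q].map (Lmul (us ++ [e])) = [0, Lmul (us ++ [e]) q] := by
      simp [hbent]
    rw [hmap, f_pair_zero hf] at hV
    exact hV
  have hEx : e * x = x1 + 0 + α • xa + β • xb := by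
    rw [hd, mul_add, mul_add, mul_add, mem_eig.mp m1, mem_eig.mp m0, mem_eig.mp ma,
      mem_eig.mp mb, one_smul, zero_smul]
  have hcomp := peel_gen h hm (3 * r - 1) (e * x) x1 0 (α • xa) (β • xb) m1 eig_zero
    (eig_smul α ma) (eig_smul β mb) hEx step1
  have hxa : xa = 0 := smul_cancel h.hα0 hcomp.2.1
  have hxb : xb = 0 := smul_cancel h.hβ0 hcomp.2.2
  have hx1 : x1 = 0 := by
    have hV := fV_mul hf 3 (List.replicate (3 * r) e) (by simp) [b, q]
    have hbent : Lmul (List.replicate (3 * r) e) b = 0 := by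
      rw [Lmul_replicate_eig _ hb, zero_pow (by omega : 3 * r ≠ 0), zero_smul]
    have hmap : [b, q].map (Lmul (List.replicate (3 * r) e)) =
        [0, Lmul (List.replicate (3 * r) e) q] := by simp [hbent]
    rw [hmap, f_pair_zero hf] at hV
    have hLx : Lmul (List.replicate (3 * r) e) x = x1 := by
      rw [hd, Lmul_add, Lmul_add, Lmul_add, Lmul_replicate_eig _ m1, Lmul_replicate_eig _ m0,
        Lmul_replicate_eig _ ma, Lmul_replicate_eig _ mb, hxa, hxb, one_pow, one_smul,
        zero_pow (by omega : 3 * r ≠ 0), zero_smul, smul_zero, smul_zero, add_zero, add_zero,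
        add_zero]
    rw [hLx] at hV
    exact hV
  have hx : x = x0 := by rw [hd, hx1, hxa, hxb, zero_add, add_zero, add_zero]
  show x ∈ eigSet e (0 : F)
  rw [hd, hx1, hxa, hxb, zero_add, add_zero, add_zero]
  exact m0

lemma Lmul_triple (a b c x : A) : Lmul [a, b, c] x = a * (b * (c * x)) := rfl

include h hm hf in
/-- `f(a_α, a_β)` lies in `A_α`. -/
lemma L_Vab_mem {p q : A} (hp : p ∈ eigSet e α) (hq : q ∈ eigSet e β) :
    f [p, q] ∈ eigSet e α := by
  have hr : 0 < r := hf.1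
  obtain ⟨m1', m2', m3', m4', m5', m6', m7'⟩ := hm
  set x := f [p, q] with hxdef
  obtain ⟨x1, m1, x0, m0, xa, ma, xb, mb, hd⟩ := h.decomp x
  -- part (a)
  have hPQ : ∀ t ∈ eigSet e α, ∀ u ∈ eigSet e (0 : F),
      u * (t * x1) + u * (t * x0) = 0 ∧ u * (t * xb) = 0 := by
    intro t ht u hu
    obtain ⟨w1, hw1, w0, hw0, hw⟩ := h.faa t ht xa ma
    -- the value of all words us ++ [e,u,t] is zero
    have hwa : ∀ us : List A, us.length = 3 * r - 3 →
        (∀ v ∈ us, v ∈ eigSet e (0 : F)) → Lmul us (e * (u * (t * x))) = 0 := by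
      intro us hlen hmem
      have hV := fV_mul hf 3 (us ++ [e, u, t]) (by simp [hlen]; omega) [p, q]
      rw [Lmul_append, Lmul_triple] at hV
      have hpent : Lmul (us ++ [e, u, t]) p = 0 := by
        obtain ⟨v1, hv1, v0, hv0, hv⟩ := h.faa t ht p hp
        rw [Lmul_append, Lmul_triple, hv, mul_add, pA0A1 h hu hv1, zero_add,
          mem_eig.mp (pA0A0 h hu hv0), zero_smul, Lmul_zero]
      have hmap : [p, q].map (Lmul (us ++ [e, u, t])) = [0, Lmul (us ++ [e, u, t]) q] := by
        simp [hpent]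
      rw [hmap, f_pair_zero hf] at hV
      exact hV
    -- decompose e * (u * (t * x))
    have ht1 : t * x = t * x1 + t * x0 + (w1 + w0) + t * xb := by
      rw [hd, mul_add, mul_add, mul_add, hw]
    have hu1 : u * (t * x) = (u * (t * x1) + u * (t * x0)) + u * w0 + u * (t * xb) := by
      rw [ht1]; simp only [mul_add]
      rw [pA0A1 h hu hw1, zero_add]
    have hPmem : u * (t * x1) + u * (t * x0) ∈ eigSet e α :=
      eig_add (pA0Aa h hu (pAaA1 h ht m1)) (pA0Aa h hu (pAaA0 h ht m0))
    have hQmem : u * (t * xb) ∈ eigSet e β := pA0Ab h hu (pAaAb h ht mb)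
    have hZ : e * (u * (t * x)) = 0 + 0 + α • (u * (t * x1) + u * (t * x0)) +
        β • (u * (t * xb)) := by
      rw [hu1, mul_add, mul_add, mem_eig.mp hPmem, mem_eig.mp (pA0A0 h hu hw0),
        mem_eig.mp hQmem, zero_smul]
      abel
    have hcomp := peel_gen h ⟨m1', m2', m3', m4', m5', m6', m7'⟩ (3 * r - 3)
      (e * (u * (t * x))) 0 0 (α • (u * (t * x1) + u * (t * x0))) (β • (u * (t * xb)))
      eig_zero eig_zero (eig_smul α hPmem) (eig_smul β hQmem) hZ hwa
    exact ⟨smul_cancel h.hα0 hcomp.2.1, smul_cancel h.hβ0 hcomp.2.2⟩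
  -- xb = 0
  have hxb : xb = 0 := by
    apply m6' xb mb
    intro t ht
    apply m5' (t * xb) (pAaAb h ht mb)
    intro u hu
    exact (hPQ t ht u hu).2
  -- [star] : t*x1 + t*x0 = 0 for all t ∈ Aα
  have hstar : ∀ t ∈ eigSet e α, t * x1 + t * x0 = 0 := by
    intro t ht
    apply m4' _ (eig_add (pAaA1 h ht m1) (pAaA0 h ht m0))
    intro u hu
    rw [mul_add]
    exact (hPQ t ht u hu).1
  -- part (b) : x1 = 0
  have hx1 : x1 = 0 := by
    apply m1' x1 m1
    intro t ht
    apply m4' (t * x1) (pAaA1 h ht m1)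
    intro u hu
    obtain ⟨w1, hw1, w0, hw0, hw⟩ := h.faa t ht xa ma
    obtain ⟨v1, hv1, v0, hv0, hv⟩ := h.faa t ht p hp
    set ts : List A := u :: t :: List.replicate (3 * r - 2) e with hts
    have hlen : ts.length = 3 * r := by simp [hts]; omega
    have hV := fV_mul hf 3 ts hlen [p, q]
    have hrep : Lmul (List.replicate (3 * r - 2) e) x = x1 + α ^ (3 * r - 2) • xa := by
      rw [hd, Lmul_add, Lmul_add, Lmul_add, Lmul_replicate_eig _ m1, Lmul_replicate_eig _ m0,
        Lmul_replicate_eig _ ma, Lmul_replicate_eig _ mb, hxb, one_pow, one_smul,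
        zero_pow (by omega : 3 * r - 2 ≠ 0), zero_smul, smul_zero]
      abel
    have hLHS : Lmul ts x = u * (t * x1) + α ^ (3 * r - 2) • (u * w0) := by
      rw [hts, Lmul_cons, Lmul_cons, hrep, mul_add, mul_smul_comm, hw, mul_add,
        mul_smul_comm, mul_add, pA0A1 h hu hw1, zero_add]
    have hep : Lmul ts p = α ^ (3 * r - 2) • (u * v0) := by
      rw [hts, Lmul_cons, Lmul_cons, Lmul_replicate_eig _ hp, mul_smul_comm, hv,
        mul_smul_comm, mul_add, pA0A1 h hu hv1, zero_add]
    have heq : Lmul ts q ∈ eigSet e β := by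
      rw [hts, Lmul_cons, Lmul_cons, Lmul_replicate_eig _ hq, mul_smul_comm, mul_smul_comm]
      exact eig_smul _ (pA0Ab h hu (pAaAb h ht hq))
    have hmap : [p, q].map (Lmul ts) = [α ^ (3 * r - 2) • (u * v0), Lmul ts q] := by
      simp [hep]
    rw [hmap, hLHS] at hV
    have hvmem : f [α ^ (3 * r - 2) • (u * v0), Lmul ts q] ∈ eigSet e (0 : F) :=
      L_V0b h ⟨m1', m2', m3', m4', m5', m6', m7'⟩ hf
        (eig_smul _ (pA0A0 h hu hv0)) heq
    have hsub : u * (t * x1) = f [α ^ (3 * r - 2) • (u * v0), Lmul ts q] -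
        α ^ (3 * r - 2) • (u * w0) := eq_sub_of_add_eq hV
    have h0mem : u * (t * x1) ∈ eigSet e (0 : F) := by
      rw [hsub]
      exact eig_sub hvmem (eig_smul _ (pA0A0 h hu hw0))
    exact eig_disjoint h.hα0 (pA0Aa h hu (pAaA1 h ht m1)) h0mem
  -- x0 = 0
  have hx0 : x0 = 0 := by
    apply m2' x0 m0
    intro t ht
    have := hstar t ht
    rw [hx1, mul_zero, zero_add] at this
    exact this
  show x ∈ eigSet e α
  rw [hd, hx1, hx0, hxb, zero_add, zero_add, add_zero]
  exact ma

include h hm hf in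
/-- `f(a_α, a_β) = 0`. -/
lemma L_Vab_zero {p q : A} (hp : p ∈ eigSet e α) (hq : q ∈ eigSet e β) :
    f [p, q] = 0 := by
  have hr : 0 < r := hf.1
  obtain ⟨m1', m2', m3', m4', m5', m6', m7'⟩ := hm
  set x := f [p, q] with hxdef
  have hxmem : x ∈ eigSet e α := L_Vab_mem h ⟨m1', m2', m3', m4', m5', m6', m7'⟩ hf hp hq
  apply m7' x hxmem
  intro t ht
  apply m5' (t * x) (pAbAa h ht hxmem)
  intro u hu
  have hy : β • (u * (t * x)) = 0 := by
    apply peel_eig (fun v hv z hz => pA0Ab h hv hz) (fun z hz hall => m5' z hz hall)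
      (3 * r - 3) _ (eig_smul β (pA0Ab h hu (pAbAa h ht hxmem)))
    intro us hlen hmem
    have hV := fV_mul hf 3 (us ++ [e, u, t]) (by simp [hlen]; omega) [p, q]
    rw [Lmul_append, Lmul_triple] at hV
    have hval : e * (u * (t * x)) = β • (u * (t * x)) :=
      mem_eig.mp (pA0Ab h hu (pAbAa h ht hxmem))
    rw [hval] at hV
    -- image entries
    have hpent : Lmul (us ++ [e, u, t]) p ∈ eigSet e β := by
      rw [Lmul_append, Lmul_triple]
      have : e * (u * (t * p)) = β • (u * (t * p)) :=
        mem_eig.mp (pA0Ab h hu (pAbAa h ht hp))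
      rw [this]
      exact LA0_pres (fun v hv z hz => pA0Ab h hv hz) us hmem _
        (eig_smul β (pA0Ab h hu (pAbAa h ht hp)))
    have hqent : Lmul (us ++ [e, u, t]) q ∈ eigSet e α := by
      obtain ⟨z1, hz1, z0, hz0, za, hza, hz⟩ := h.fbb t ht q hq
      rw [Lmul_append, Lmul_triple, hz]
      simp only [mul_add]
      rw [pA0A1 h hu hz1, mul_zero, zero_add, mem_eig.mp (pA0A0 h hu hz0), zero_smul,
        zero_add, mem_eig.mp (pA0Aa h hu hza)]
      exact LA0_pres (fun v hv z hz => pA0Aa h hv hz) us hmem _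
        (eig_smul α (pA0Aa h hu hza))
    have hmap : [p, q].map (Lmul (us ++ [e, u, t])) =
        [Lmul (us ++ [e, u, t]) p, Lmul (us ++ [e, u, t]) q] := by simp
    rw [hmap] at hV
    have himg : f [Lmul (us ++ [e, u, t]) p, Lmul (us ++ [e, u, t]) q] ∈ eigSet e α := by
      rw [hf.2.1 _ _ (List.Perm.swap (Lmul (us ++ [e, u, t]) q) (Lmul (us ++ [e, u, t]) p) [])]
      exact L_Vab_mem h ⟨m1', m2', m3', m4', m5', m6', m7'⟩ hf hqent hpent
    have hvalmem : Lmul us (β • (u * (t * x))) ∈ eigSet e β :=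
      LA0_pres (fun v hv z hz => pA0Ab h hv hz) us hmem _
        (eig_smul β (pA0Ab h hu (pAbAa h ht hxmem)))
    rw [hV] at hvalmem
    have : f [Lmul (us ++ [e, u, t]) p, Lmul (us ++ [e, u, t]) q] = 0 :=
      eig_disjoint h.hαβ himg hvalmem
    rw [this] at hV
    exact hV
  exact smul_cancel h.hβ0 hy

include h hm hf in
/-- `f(a₀, a_α, a_β)` lies in `A₀`. -/
lemma L_T3_mem {b0 bα bβ : A} (h0 : b0 ∈ eigSet e (0 : F)) (ha : bα ∈ eigSet e α)
    (hb : bβ ∈ eigSet e β) : f [b0, bα, bβ] ∈ eigSet e (0 : F) := by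
  have hr : 0 < r := hf.1
  set y := f [b0, bα, bβ] with hydef
  obtain ⟨y1, m1, y0, m0, ya, ma, yb, mb, hd⟩ := h.decomp y
  have step1 : ∀ us : List A, us.length = 3 * r - 1 →
      (∀ u ∈ us, u ∈ eigSet e (0 : F)) → Lmul us (e * y) = 0 := by
    intro us hlen hmem
    have hV := fV_mul hf 3 (us ++ [e]) (by simp [hlen]; omega) [b0, bα, bβ]
    rw [Lmul_append, Lmul_singleton] at hV
    have h0ent : Lmul (us ++ [e]) b0 = 0 := by
      rw [Lmul_append, Lmul_singleton, mem_eig.mp h0, zero_smul, Lmul_zero]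
    have haent : Lmul (us ++ [e]) bα ∈ eigSet e α := by
      rw [Lmul_append, Lmul_singleton, mem_eig.mp ha]
      exact LA0_pres (fun v hv z hz => pA0Aa h hv hz) us hmem _ (eig_smul α ha)
    have hbent : Lmul (us ++ [e]) bβ ∈ eigSet e β := by
      rw [Lmul_append, Lmul_singleton, mem_eig.mp hb]
      exact LA0_pres (fun v hv z hz => pA0Ab h hv hz) us hmem _ (eig_smul β hb)
    have hmap : [b0, bα, bβ].map (Lmul (us ++ [e])) =
        [0, Lmul (us ++ [e]) bα, Lmul (us ++ [e]) bβ] := by simp [h0ent]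
    rw [hmap, f_zero_head hf _ (by simp),
      L_Vab_zero h hm hf haent hbent] at hV
    exact hV
  have hEy : e * y = y1 + 0 + α • ya + β • yb := by
    rw [hd, mul_add, mul_add, mul_add, mem_eig.mp m1, mem_eig.mp m0, mem_eig.mp ma,
      mem_eig.mp mb, one_smul, zero_smul]
  have hcomp := peel_gen h hm (3 * r - 1) (e * y) y1 0 (α • ya) (β • yb) m1 eig_zero
    (eig_smul α ma) (eig_smul β mb) hEy step1
  have hya : ya = 0 := smul_cancel h.hα0 hcomp.2.1
  have hyb : yb = 0 := smul_cancel h.hβ0 hcomp.2.2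
  have hy1 : y1 = 0 := by
    have hV := fV_mul hf 3 (List.replicate (3 * r) e) (by simp) [b0, bα, bβ]
    have h0ent : Lmul (List.replicate (3 * r) e) b0 = 0 := by
      rw [Lmul_replicate_eig _ h0, zero_pow (by omega : 3 * r ≠ 0), zero_smul]
    have hmap : [b0, bα, bβ].map (Lmul (List.replicate (3 * r) e)) =
        [0, Lmul (List.replicate (3 * r) e) bα, Lmul (List.replicate (3 * r) e) bβ] := by
      simp [h0ent]
    have haent : Lmul (List.replicate (3 * r) e) bα ∈ eigSet e α := by
      rw [Lmul_replicate_eig _ ha]; exact eig_smul _ ha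
    have hbent : Lmul (List.replicate (3 * r) e) bβ ∈ eigSet e β := by
      rw [Lmul_replicate_eig _ hb]; exact eig_smul _ hb
    rw [hmap, f_zero_head hf _ (by simp), L_Vab_zero h hm hf haent hbent] at hV
    have hLy : Lmul (List.replicate (3 * r) e) y = y1 := by
      rw [hd, Lmul_add, Lmul_add, Lmul_add, Lmul_replicate_eig _ m1, Lmul_replicate_eig _ m0,
        Lmul_replicate_eig _ ma, Lmul_replicate_eig _ mb, hya, hyb, one_pow, one_smul,
        zero_pow (by omega : 3 * r ≠ 0), zero_smul, smul_zero, smul_zero, add_zero, add_zero,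
        add_zero]
    rw [hLy] at hV
    exact hV
  show y ∈ eigSet e (0 : F)
  rw [hd, hy1, hya, hyb, zero_add, add_zero, add_zero]
  exact m0

include h hm hf in
/-- `f(a₀, a_α, a_β) = 0`. -/
lemma L_T3_zero {b0 bα bβ : A} (h0 : b0 ∈ eigSet e (0 : F)) (ha : bα ∈ eigSet e α)
    (hb : bβ ∈ eigSet e β) : f [b0, bα, bβ] = 0 := by
  have hr : 0 < r := hf.1
  obtain ⟨m1', m2', m3', m4', m5', m6', m7'⟩ := hm
  set y := f [b0, bα, bβ] with hydef
  have hymem : y ∈ eigSet e (0 : F) :=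
    L_T3_mem h ⟨m1', m2', m3', m4', m5', m6', m7'⟩ hf h0 ha hb
  apply m2' y hymem
  intro t ht
  apply peel_eig (fun v hv z hz => pA0Aa h hv hz) (fun z hz hall => m4' z hz hall)
    (3 * r - 1) _ (pAaA0 h ht hymem)
  intro us hlen hmem
  have hne : us ≠ [] := List.ne_nil_of_length_pos (by rw [hlen]; omega)
  have hV := fV_mul hf 3 (us ++ [t]) (by simp [hlen]; omega) [b0, bα, bβ]
  rw [Lmul_append, Lmul_singleton] at hV
  obtain ⟨w1, hw1, w0, hw0, hw⟩ := h.faa t ht bα ha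
  have h0ent : Lmul (us ++ [t]) b0 ∈ eigSet e α := by
    rw [Lmul_append, Lmul_singleton]
    exact LA0_pres (fun v hv z hz => pA0Aa h hv hz) us hmem _ (pAaA0 h ht h0)
  have haent : Lmul (us ++ [t]) bα ∈ eigSet e (0 : F) := by
    rw [Lmul_append, Lmul_singleton, hw, Lmul_add, LA0_kill h us hne hmem w1 hw1, zero_add]
    exact LA0_pres (fun v hv z hz => pA0A0 h hv hz) us hmem _ hw0
  have hbent : Lmul (us ++ [t]) bβ ∈ eigSet e β := by
    rw [Lmul_append, Lmul_singleton]
    exact LA0_pres (fun v hv z hz => pA0Ab h hv hz) us hmem _ (pAaAb h ht hb)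
  have hmap : [b0, bα, bβ].map (Lmul (us ++ [t])) =
      [Lmul (us ++ [t]) b0, Lmul (us ++ [t]) bα, Lmul (us ++ [t]) bβ] := by simp
  rw [hmap] at hV
  have himg : f [Lmul (us ++ [t]) b0, Lmul (us ++ [t]) bα, Lmul (us ++ [t]) bβ]
      ∈ eigSet e (0 : F) := by
    rw [hf.2.1 _ _ (List.Perm.swap (Lmul (us ++ [t]) bα) (Lmul (us ++ [t]) b0)
      [Lmul (us ++ [t]) bβ])]
    exact L_T3_mem h ⟨m1', m2', m3', m4', m5', m6', m7'⟩ hf haent h0ent hbent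
  have hvalmem : Lmul us (t * y) ∈ eigSet e α :=
    LA0_pres (fun v hv z hz => pA0Aa h hv hz) us hmem _ (pAaA0 h ht hymem)
  rw [hV] at hvalmem
  have : f [Lmul (us ++ [t]) b0, Lmul (us ++ [t]) bα, Lmul (us ++ [t]) bβ] = 0 :=
    eig_disjoint h.hα0 hvalmem himg
  rw [this] at hV
  exact hV

end Fside


/-- Lemma 5.2: `f(a₁, a₀, a_α, a_β) = 0` on eigencomponents. -/
theorem malg_nullifying_quadruple {F A : Type*} [Field F] [NonUnitalNonAssocCommRing A]
    [Module F A] [SMulCommClass F A A] [IsScalarTower F A A]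
    (e : A) (α β : F) (h : IsMAlg e α β) (hm : MartindaleM e α β)
    (f : List A → A) (r : ℕ) (hf : IsNullifying f r)
    (a1 : A) (h1 : a1 ∈ eigSet e (1 : F))
    (a0 : A) (h0 : a0 ∈ eigSet e (0 : F))
    (aα : A) (ha : aα ∈ eigSet e α)
    (aβ : A) (hb : aβ ∈ eigSet e β) :
    f [a1, a0, aα, aβ] = 0 := by
  have hr : 0 < r := hf.1
  obtain ⟨m1', m2', m3', m4', m5', m6', m7'⟩ := hm
  set x := f [a1, a0, aα, aβ] with hxdef
  obtain ⟨x1, m1, x0, m0, xa, ma, xb, mb, hd⟩ := h.decomp x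
  -- Step A: all A₀-words of length 3r kill x
  have hall : ∀ ts : List A, ts.length = 3 * r →
      (∀ u ∈ ts, u ∈ eigSet e (0 : F)) → Lmul ts x = 0 := by
    intro ts hlen hmem
    have hne : ts ≠ [] := List.ne_nil_of_length_pos (by rw [hlen]; omega)
    have hV := fV_mul hf 3 ts hlen [a1, a0, aα, aβ]
    have h1ent : Lmul ts a1 = 0 := LA0_kill h ts hne hmem a1 h1
    have h0ent : Lmul ts a0 ∈ eigSet e (0 : F) :=
      LA0_pres (fun v hv z hz => pA0A0 h hv hz) ts hmem _ h0
    have haent : Lmul ts aα ∈ eigSet e α :=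
      LA0_pres (fun v hv z hz => pA0Aa h hv hz) ts hmem _ ha
    have hbent : Lmul ts aβ ∈ eigSet e β :=
      LA0_pres (fun v hv z hz => pA0Ab h hv hz) ts hmem _ hb
    have hmap : [a1, a0, aα, aβ].map (Lmul ts) =
        [0, Lmul ts a0, Lmul ts aα, Lmul ts aβ] := by simp [h1ent]
    rw [hmap, f_zero_head hf _ (by simp),
      L_T3_zero h ⟨m1', m2', m3', m4', m5', m6', m7'⟩ hf h0ent haent hbent] at hV
    exact hV
  have hcomp := peel_gen h ⟨m1', m2', m3', m4', m5', m6', m7'⟩ (3 * r) x x1 x0 xa xb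
    m1 m0 ma mb hd hall
  have hxmem : x ∈ eigSet e (1 : F) := by
    rw [hd, hcomp.1, hcomp.2.1, hcomp.2.2, add_zero, add_zero, add_zero]
    exact m1
  -- Step B: kill the A₁-component
  show x = 0
  apply m1' x hxmem
  intro t ht
  apply m4' (t * x) (pAaA1 h ht hxmem)
  intro u hu
  set ts : List A := u :: t :: List.replicate (3 * r - 2) e with hts
  have hlen : ts.length = 3 * r := by simp [hts]; omega
  have hV := fV_mul hf 3 ts hlen [a1, a0, aα, aβ]
  have hLHS : Lmul ts x = u * (t * x) := by
    rw [hts, Lmul_cons, Lmul_cons, Lmul_replicate_eig _ hxmem, one_pow, one_smul]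
  obtain ⟨w1, hw1, w0, hw0, hw⟩ := h.faa t ht aα ha
  have h1ent : Lmul ts a1 ∈ eigSet e α := by
    rw [hts, Lmul_cons, Lmul_cons, Lmul_replicate_eig _ h1, one_pow, one_smul]
    exact pA0Aa h hu (pAaA1 h ht h1)
  have h0ent : Lmul ts a0 = 0 := by
    rw [hts, Lmul_cons, Lmul_cons, Lmul_replicate_eig _ h0,
      zero_pow (by omega : 3 * r - 2 ≠ 0), zero_smul, mul_zero, mul_zero]
  have haent : Lmul ts aα = α ^ (3 * r - 2) • (u * w0) := by
    rw [hts, Lmul_cons, Lmul_cons, Lmul_replicate_eig _ ha, mul_smul_comm, hw,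
      mul_smul_comm, mul_add, pA0A1 h hu hw1, zero_add]
  have haentmem : α ^ (3 * r - 2) • (u * w0) ∈ eigSet e (0 : F) :=
    eig_smul _ (pA0A0 h hu hw0)
  have hbent : Lmul ts aβ ∈ eigSet e β := by
    rw [hts, Lmul_cons, Lmul_cons, Lmul_replicate_eig _ hb, mul_smul_comm, mul_smul_comm]
    exact eig_smul _ (pA0Ab h hu (pAaAb h ht hb))
  have hmap : [a1, a0, aα, aβ].map (Lmul ts) =
      [Lmul ts a1, 0, α ^ (3 * r - 2) • (u * w0), Lmul ts aβ] := by
    simp [h0ent, haent]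
  rw [hmap, hLHS] at hV
  have himg : f [Lmul ts a1, 0, α ^ (3 * r - 2) • (u * w0), Lmul ts aβ] = 0 := by
    rw [hf.2.1 _ _ (List.Perm.swap 0 (Lmul ts a1)
      [α ^ (3 * r - 2) • (u * w0), Lmul ts aβ]),
      f_zero_head hf _ (by simp),
      hf.2.1 _ _ (List.Perm.swap (α ^ (3 * r - 2) • (u * w0)) (Lmul ts a1) [Lmul ts aβ])]
    exact L_T3_zero h ⟨m1', m2', m3', m4', m5', m6', m7'⟩ hf haentmem h1ent hbent
  rw [himg] at hV
  exact hV
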